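/- Let $M$ be a finite loopless matroid on a linearly ordered ground set $E$ with least element $0$, of rank $r+1$. Then the reduced characteristic polynomial $\overline{\chi_M}(q) = \chi_M(q)/(q-1)$ satisfies $\overline{\chi_M}(q) = \sum_{i=0}^{r} (-1)^i f_i(\overline{\mathrm{BC}}(M)) q^{r-i}$, where $f_i(\overline{\mathrm{BC}}(M))$ is the number of cardinality-$i$ subsets of $E \setminus \{0\}$ containing no broken circuit of $M$. -/

import Mathlib

open Finset Polynomial

open scoped Classical in
/-- The rank of a set `X` in a matroid `M`. -/
noncomputable def matroidRank {α : Type*} (M : Matroid α) (X : Set α) : ℕ :=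
  sSup {n | ∃ I : Finset α, ↑I ⊆ X ∧ M.Indep ↑I ∧ I.card = n}

/-- A circuit of a matroid: a minimal dependent set (here as a finset). -/
def IsMatroidCircuit {α : Type*} (M : Matroid α) (C : Finset α) : Prop :=
  ↑C ⊆ M.E ∧ ¬ M.Indep ↑C ∧ ∀ D : Finset α, D ⊂ C → M.Indep ↑D

/-- A broken circuit: a circuit with its least element (in the linear order) removed. -/
def IsBrokenCircuit {α : Type*} [LinearOrder α] (M : Matroid α) (B : Finset α) : Prop :=
  ∃ C : Finset α, IsMatroidCircuit M C ∧ ∃ h : C.Nonempty, B = C.erase (C.min' h)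

open scoped Classical in
/-- The characteristic polynomial of a matroid `M` of rank `r + 1`, with respect to
a Möbius function `μ` of the lattice of flats. -/
noncomputable def charPoly {α : Type*} [Fintype α] (M : Matroid α) (μ : Finset α → ℤ)
    (r : ℕ) : Polynomial ℤ :=
  ∑ F ∈ Finset.univ.filter (fun F : Finset α => M.IsFlat ↑F),
    C (μ F) * X ^ (r + 1 - matroidRank M ↑F)

section Aux
open scoped Classical

variable {α : Type*} [Fintype α] (M : Matroid α)

lemma flat_closure' (X : Set α) : M.IsFlat (M.closure X) := by
  refine ⟨fun I X' hIF hIX' => ?_, M.closure_subset_ground X⟩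
  have h1 : X' ⊆ M.closure I := hIX'.subset_closure
  have h2 : M.closure I = M.closure (M.closure X) := hIF.closure_eq_closure
  rwa [h2, Matroid.closure_closure] at h1

variable (hE : M.E = Set.univ)
include hE

lemma sub_ground (X : Set α) : X ⊆ M.E := hE ▸ Set.subset_univ X

lemma closure_empty_eq (h_loopless : ∀ a : α, M.Indep {a}) : M.closure ∅ = ∅ := by
  ext a
  simp only [Set.mem_empty_iff_false, iff_false]
  intro ha
  have h1 := (h_loopless a).notMem_closure_diff_of_mem (Set.mem_singleton a)
  rw [Set.diff_self] at h1
  exact h1 ha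

lemma indep_card_le_rank {I : Finset α} (hI : M.Indep ↑I) :
    I.card ≤ matroidRank M Set.univ := by
  apply le_csSup
  · exact ⟨Fintype.card α, fun n ⟨J, _, _, hc⟩ => hc ▸ J.card_le_univ⟩
  · exact ⟨I, Set.subset_univ _, hI, rfl⟩

lemma rank_closure_indep {S : Finset α} (hS : M.Indep ↑S) :
    matroidRank M (M.closure ↑S) = S.card := by
  apply le_antisymm
  · apply csSup_le
    · exact ⟨S.card, S, M.subset_closure ↑S (sub_ground M hE _), hS, rfl⟩
    rintro n ⟨I, hIsub, hI, rfl⟩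
    obtain ⟨J, hJ, hIJ⟩ := hI.subset_isBasis_of_subset hIsub (M.closure_subset_ground _)
    have h1 : J.encard = (↑S : Set α).encard := hJ.encard_eq_encard hS.isBasis_closure
    have h2 : (↑I : Set α).encard ≤ J.encard := Set.encard_le_encard hIJ
    rw [h1, Set.encard_coe_eq_coe_finsetCard, Set.encard_coe_eq_coe_finsetCard] at h2
    exact_mod_cast h2
  · apply le_csSup
    · exact ⟨Fintype.card α, fun n ⟨J, _, _, hc⟩ => hc ▸ J.card_le_univ⟩
    · exact ⟨S, M.subset_closure ↑S (sub_ground M hE _), hS, rfl⟩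

end Aux

set_option linter.unusedSectionVars false

section Aux2
open scoped Classical

variable {α : Type*} [Fintype α] [LinearOrder α] (M : Matroid α)

noncomputable def DSet (S : Finset α) : Finset α :=
  Finset.univ.filter (fun e => e ∈ M.closure ↑(S.filter (fun x => e < x)))

lemma mem_DSet {S : Finset α} {e : α} :
    e ∈ DSet M S ↔ e ∈ M.closure ↑(S.filter (fun x => e < x)) := by
  simp [DSet]

lemma DSet_mono {S T : Finset α} (h : S ⊆ T) : DSet M S ⊆ DSet M T := by
  intro e he
  rw [mem_DSet] at he ⊢
  exact M.closure_subset_closure (by exact_mod_cast Finset.filter_subset_filter _ h) he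

lemma filter_insert_self (S : Finset α) (e : α) :
    (insert e S).filter (fun x => e < x) = S.filter (fun x => e < x) := by
  ext x
  simp only [Finset.mem_filter, Finset.mem_insert]
  constructor
  · rintro ⟨(rfl | hx), hlt⟩
    · exact absurd hlt (lt_irrefl x)
    · exact ⟨hx, hlt⟩
  · rintro ⟨hx, hlt⟩; exact ⟨Or.inr hx, hlt⟩

lemma filter_erase_self (S : Finset α) (e : α) :
    (S.erase e).filter (fun x => e < x) = S.filter (fun x => e < x) := by
  ext x
  simp only [Finset.mem_filter, Finset.mem_erase]
  constructor
  · rintro ⟨⟨_, hx⟩, hlt⟩; exact ⟨hx, hlt⟩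
  · rintro ⟨hx, hlt⟩; exact ⟨⟨fun h => absurd (h ▸ hlt) (lt_irrefl e), hx⟩, hlt⟩

variable (hE : M.E = Set.univ)
include hE

lemma exists_circuit_of_dep : ∀ S : Finset α, ¬ M.Indep ↑S →
    ∃ C, C ⊆ S ∧ IsMatroidCircuit M C := by
  intro S
  induction S using Finset.strongInduction with
  | _ S ih =>
    intro hS
    by_cases h : ∀ D : Finset α, D ⊂ S → M.Indep ↑D
    · exact ⟨S, Finset.Subset.refl S, sub_ground M hE _, hS, h⟩
    · push_neg at h
      obtain ⟨D, hD, hdep⟩ := h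
      obtain ⟨C, hCD, hC⟩ := ih D hD hdep
      exact ⟨C, hCD.trans hD.subset, hC⟩

lemma broken_of_dep {S : Finset α} (hS : ¬ M.Indep ↑S) :
    ∃ B, IsBrokenCircuit M B ∧ B ⊆ S := by
  obtain ⟨C, hCS, hC⟩ := exists_circuit_of_dep M hE S hS
  have hne : C.Nonempty := by
    rcases C.eq_empty_or_nonempty with rfl | h
    · exact absurd (by simpa using M.empty_indep) hC.2.1
    · exact h
  exact ⟨C.erase (C.min' hne), ⟨C, hC, hne, rfl⟩,
    (Finset.erase_subset _ _).trans hCS⟩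

lemma min_mem_dset_of_broken {S B : Finset α} (hB : IsBrokenCircuit M B) (hBS : B ⊆ S) :
    (DSet M S).Nonempty := by
  obtain ⟨C, hC, hne, rfl⟩ := hB
  set e := C.min' hne with he_def
  have heC : e ∈ C := C.min'_mem hne
  have herase : C.erase e ⊂ C := Finset.erase_ssubset heC
  have hindep : M.Indep ↑(C.erase e) := hC.2.2 _ herase
  have henotin : e ∉ (↑(C.erase e) : Set α) := fun h => (Finset.mem_erase.1 (by exact_mod_cast h)).1 rfl
  have hinsert : (insert e (↑(C.erase e) : Set α)) = ↑C := by
    rw [Finset.coe_erase, Set.insert_diff_singleton, Set.insert_eq_self.2 (by exact_mod_cast heC)]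
  have hecl : e ∈ M.closure ↑(C.erase e) := by
    by_contra hcl
    have := (hindep.insert_indep_iff_of_notMem henotin).2 ⟨sub_ground M hE _ (Set.mem_univ e), hcl⟩
    rw [hinsert] at this
    exact hC.2.1 this
  refine ⟨e, ?_⟩
  rw [mem_DSet]
  refine M.closure_subset_closure ?_ hecl
  intro x hx
  simp only [Finset.coe_filter, Set.mem_setOf_eq]
  obtain ⟨hxne, hxC⟩ := Finset.mem_erase.1 (by exact_mod_cast hx)
  exact ⟨hBS (Finset.mem_erase.2 ⟨hxne, hxC⟩),
    lt_of_le_of_ne (C.min'_le x hxC) (Ne.symm hxne)⟩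

lemma broken_of_mem_dset {S : Finset α} {e : α} (he : e ∈ DSet M S) :
    ∃ B, IsBrokenCircuit M B ∧ B ⊆ S ∧ (∀ x ∈ B, e < x) ∧
      ∃ (C : Finset α) (hne : C.Nonempty), IsMatroidCircuit M C ∧ C.min' hne = e ∧
        B = C.erase e := by
  rw [mem_DSet] at he
  set T := S.filter (fun x => e < x) with hT
  have hne : (T.powerset.filter (fun A : Finset α => e ∈ M.closure (↑A : Set α))).Nonempty :=
    ⟨T, by simp [he]⟩
  obtain ⟨A, hA, hmin⟩ := Finset.exists_minimal hne
  simp only [Finset.mem_filter, Finset.mem_powerset] at hA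
  obtain ⟨hAT, heA⟩ := hA
  have hminA : ∀ A' ⊂ A, e ∉ M.closure ↑A' := by
    intro A' hA' hcl
    exact hA'.not_subset (hmin (Finset.mem_filter.2 ⟨Finset.mem_powerset.2 (hA'.subset.trans hAT), hcl⟩) hA'.subset)
  have hAgt : ∀ x ∈ A, e < x := fun x hx => (Finset.mem_filter.1 (hAT hx)).2
  have heA' : e ∉ A := fun h => absurd (hAgt e h) (lt_irrefl e)
  have hAindep : M.Indep ↑A := by
    by_contra hdep
    rw [Matroid.indep_iff_forall_notMem_closure_diff (sub_ground M hE _)] at hdep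
    push_neg at hdep
    obtain ⟨a, haA, hacl⟩ := hdep
    have h1 : M.closure ((↑A : Set α) \ {a}) = M.closure ↑A := by
      have h2 := Matroid.closure_insert_eq_of_mem_closure hacl
      rw [Set.insert_diff_singleton, Set.insert_eq_self.2 haA] at h2
      exact h2.symm
    have haA' : a ∈ A := by exact_mod_cast haA
    refine hminA (A.erase a) (Finset.erase_ssubset haA') ?_
    rw [Finset.coe_erase, h1]
    exact heA
  -- C := insert e A is a circuit with min e
  have hCdep : ¬ M.Indep ↑(insert e A) := by
    intro hind
    rw [Finset.coe_insert] at hind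
    rw [hAindep.insert_indep_iff_of_notMem (by exact_mod_cast heA')] at hind
    exact hind.2 heA
  have hCmem : e ∈ insert e A := Finset.mem_insert_self e A
  have hsubind : ∀ D : Finset α, D ⊂ insert e A → M.Indep ↑D := by
    intro D hD
    by_cases heD : e ∈ D
    · have hDe : D.erase e ⊆ A := by
        intro x hx
        obtain ⟨hxe, hxD⟩ := Finset.mem_erase.1 hx
        rcases Finset.mem_insert.1 (hD.subset hxD) with rfl | h
        · exact absurd rfl hxe
        · exact h
      have hDne : D.erase e ≠ A := by
        rintro h
        apply hD.not_subset  -- insert e A ⊆ D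
        intro x hx
        rcases Finset.mem_insert.1 hx with rfl | hxA
        · exact heD
        · rw [← h] at hxA
          exact (Finset.erase_subset _ _) hxA
      have hDes : D.erase e ⊂ A := ssubset_of_subset_of_ne hDe hDne
      have hDind : M.Indep ↑(D.erase e) := hAindep.subset (by exact_mod_cast hDe)
      have hecl : e ∉ M.closure ↑(D.erase e) := hminA _ hDes
      have : M.Indep (insert e ↑(D.erase e)) :=
        (hDind.insert_indep_iff_of_notMem (by simp)).2
          ⟨sub_ground M hE _ (Set.mem_univ e), hecl⟩
      rwa [← Finset.coe_insert, Finset.insert_erase heD] at this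
    · have : D ⊆ A := fun x hx => by
        rcases Finset.mem_insert.1 (hD.subset hx) with rfl | h
        · exact absurd hx heD
        · exact h
      exact hAindep.subset (by exact_mod_cast this)
  have hCne : (insert e A).Nonempty := ⟨e, hCmem⟩
  have hmin' : (insert e A).min' hCne = e := by
    apply le_antisymm ((insert e A).min'_le e hCmem)
    rcases Finset.mem_insert.1 ((insert e A).min'_mem hCne) with h | h
    · rw [h]
    · exact le_of_lt (hAgt _ h)
  refine ⟨A, ⟨insert e A, ⟨sub_ground M hE _, hCdep, hsubind⟩, hCne, by
      rw [hmin', Finset.erase_insert heA']⟩,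
    (hAT.trans (Finset.filter_subset _ _)), hAgt,
    insert e A, hCne, ⟨sub_ground M hE _, hCdep, hsubind⟩, hmin',
    (Finset.erase_insert heA').symm⟩

lemma bcfree_iff_dset_empty (S : Finset α) :
    (∀ B, IsBrokenCircuit M B → ¬ B ⊆ S) ↔ DSet M S = ∅ := by
  constructor
  · intro h
    rw [← Finset.not_nonempty_iff_eq_empty]
    rintro ⟨e, he⟩
    obtain ⟨B, hB, hBS, -⟩ := broken_of_mem_dset M hE he
    exact h B hB hBS
  · intro h B hB hBS
    obtain ⟨e, he⟩ := min_mem_dset_of_broken M hE hB hBS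
    simp [h] at he

lemma indep_of_bcfree {S : Finset α} (h : ∀ B, IsBrokenCircuit M B → ¬ B ⊆ S) :
    M.Indep ↑S := by
  by_contra hdep
  obtain ⟨B, hB, hBS⟩ := broken_of_dep M hE hdep
  exact h B hB hBS

end Aux2

section Aux3
open scoped Classical

variable {α : Type*} [Fintype α] [LinearOrder α] (M : Matroid α)

def tog (S : Finset α) (e : α) : Finset α :=
  if e ∈ S then S.erase e else insert e S

lemma filter_tog (S : Finset α) (e : α) :
    (tog S e).filter (fun x => e < x) = S.filter (fun x => e < x) := by
  unfold tog
  split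
  · exact filter_erase_self S e
  · exact filter_insert_self S e

lemma mem_dset_tog {S : Finset α} {e : α} (he : e ∈ DSet M S) :
    e ∈ DSet M (tog S e) := by
  rw [mem_DSet] at he ⊢
  rwa [filter_tog]

lemma tog_tog {S : Finset α} {e : α} : tog (tog S e) e = S := by
  by_cases h : e ∈ S
  · have h1 : tog S e = S.erase e := by rw [tog, if_pos h]
    rw [h1, tog, if_neg (Finset.notMem_erase e S), Finset.insert_erase h]
  · have h1 : tog S e = insert e S := by rw [tog, if_neg h]
    rw [h1, tog, if_pos (Finset.mem_insert_self e S), Finset.erase_insert h]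

lemma tog_ne {S : Finset α} {e : α} : tog S e ≠ S := by
  unfold tog
  by_cases h : e ∈ S
  · simp only [h, if_true]
    intro hh
    exact (Finset.notMem_erase e S) (hh.symm ▸ h)
  · simp only [h, if_false]
    intro hh
    exact h (hh ▸ Finset.mem_insert_self e S)

lemma tog_card {S : Finset α} {e : α} :
    (tog S e).card = S.card + 1 ∨ S.card = (tog S e).card + 1 := by
  unfold tog
  by_cases h : e ∈ S
  · right
    simp only [h, if_true]
    exact (Finset.card_erase_add_one h).symm
  · left
    simp only [h, if_false]
    exact Finset.card_insert_of_notMem h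

lemma dset_filter_mem {S : Finset α} {e : α} (he : e ∈ DSet M S) :
    e ∈ M.closure ↑(S.filter (fun x => e < x)) := (mem_DSet M).1 he

lemma closure_filter_subset (S : Finset α) (e : α) :
    M.closure ↑(S.filter (fun x => e < x)) ⊆ M.closure ↑(S.erase e) := by
  apply M.closure_subset_closure
  intro x hx
  simp only [Finset.coe_filter, Set.mem_setOf_eq] at hx
  simp only [Finset.coe_erase, Set.mem_diff, Set.mem_singleton_iff]
  exact ⟨hx.1, fun h => absurd (h ▸ hx.2) (lt_irrefl e)⟩

lemma closure_tog {S : Finset α} {e : α} (he : e ∈ DSet M S) :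
    M.closure ↑(tog S e) = M.closure ↑S := by
  have hecl : e ∈ M.closure ↑(S.erase e) :=
    closure_filter_subset M S e (dset_filter_mem M he)
  unfold tog
  by_cases h : e ∈ S
  · simp only [h, if_true]
    have h1 := Matroid.closure_insert_eq_of_mem_closure hecl
    rw [Finset.coe_erase, Set.insert_diff_singleton,
      Set.insert_eq_self.2 (by exact_mod_cast h)] at h1
    rw [Finset.coe_erase]
    exact h1.symm
  · simp only [h, if_false]
    have hecl' : e ∈ M.closure ↑S :=
      M.closure_subset_closure (by rw [Finset.erase_eq_of_notMem h]) hecl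
    rw [Finset.coe_insert]
    exact Matroid.closure_insert_eq_of_mem_closure hecl'

lemma dset_tog_min {S : Finset α} (h : (DSet M S).Nonempty) :
    ∃ h' : (DSet M (tog S ((DSet M S).min' h))).Nonempty,
      (DSet M (tog S ((DSet M S).min' h))).min' h' = (DSet M S).min' h := by
  set e := (DSet M S).min' h with he_def
  have hemem : e ∈ DSet M (tog S e) := mem_dset_tog M ((DSet M S).min'_mem h)
  refine ⟨⟨e, hemem⟩, ?_⟩
  apply le_antisymm (Finset.min'_le _ e hemem)
  apply Finset.le_min'
  intro x hx
  by_contra hlt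
  push_neg at hlt
  -- hlt : x < e; derive x ∈ DSet M S, contradicting minimality
  have hxS : x ∈ DSet M S := by
    unfold tog at hx
    by_cases hmem : e ∈ S
    · simp only [hmem, if_true] at hx
      exact DSet_mono M (Finset.erase_subset e S) hx
    · simp only [hmem, if_false] at hx
      rw [mem_DSet] at hx
      have hfil : (insert e S).filter (fun y => x < y) =
          insert e (S.filter (fun y => x < y)) := by
        ext y
        simp only [Finset.mem_filter, Finset.mem_insert]
        constructor
        · rintro ⟨rfl | hy, hlt'⟩
          · exact Or.inl rfl
          · exact Or.inr ⟨hy, hlt'⟩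
        · rintro (rfl | ⟨hy, hlt'⟩)
          · exact ⟨Or.inl rfl, hlt⟩
          · exact ⟨Or.inr hy, hlt'⟩
      rw [hfil, Finset.coe_insert] at hx
      have hsub : S.filter (fun y => e < y) ⊆ S.filter (fun y => x < y) :=
        Finset.filter_subset_filter _ (le_refl S) |>.trans (by
          apply Finset.subset_iff.2
          intro y hy
          simp only [Finset.mem_filter] at hy ⊢
          exact ⟨hy.1, hlt.trans hy.2⟩)
      have hecl : e ∈ M.closure ↑(S.filter (fun y => x < y)) :=
        M.closure_subset_closure (by exact_mod_cast hsub) (dset_filter_mem M ((DSet M S).min'_mem h))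
      rw [Matroid.closure_insert_eq_of_mem_closure hecl] at hx
      rw [mem_DSet]
      exact hx
  exact absurd (Finset.min'_le _ x hxS) (not_le.2 hlt)

end Aux3

section Aux4
open scoped Classical

variable {α : Type*} [Fintype α] (M : Matroid α)

noncomputable def clF (S : Finset α) : Finset α := (M.closure ↑S).toFinset

lemma coe_clF (S : Finset α) : (↑(clF M S) : Set α) = M.closure ↑S := Set.coe_toFinset _

lemma clF_flat (S : Finset α) : M.IsFlat ↑(clF M S) := by
  rw [coe_clF]; exact flat_closure' M _

noncomputable def nu (F : Finset α) : ℤ :=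
  ∑ S ∈ F.powerset.filter (fun S => clF M S = F), (-1 : ℤ) ^ S.card

variable (hE : M.E = Set.univ)
include hE

lemma subset_clF (S : Finset α) : S ⊆ clF M S := by
  intro x hx
  rw [← Finset.mem_coe, coe_clF]
  exact M.subset_closure ↑S (sub_ground M hE _) hx

lemma clF_subset_flat {S F : Finset α} (hSF : S ⊆ F) (hF : M.IsFlat ↑F) : clF M S ⊆ F := by
  intro x hx
  rw [← Finset.mem_coe, coe_clF] at hx
  have := M.closure_subset_closure (show (↑S : Set α) ⊆ ↑F by exact_mod_cast hSF)
  rw [hF.closure] at this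
  exact_mod_cast this hx

lemma fiber_eq {F G : Finset α} (hGF : G ⊆ F) :
    F.powerset.filter (fun S => clF M S = G) = G.powerset.filter (fun S => clF M S = G) := by
  ext S
  simp only [Finset.mem_filter, Finset.mem_powerset]
  constructor
  · rintro ⟨_, rfl⟩
    exact ⟨subset_clF M hE S, rfl⟩
  · rintro ⟨hSG, rfl⟩
    exact ⟨hSG.trans hGF, rfl⟩

lemma sum_nu (h_loopless : ∀ a : α, M.Indep {a}) (F : Finset α) (hF : M.IsFlat ↑F) :
    ∑ G ∈ Finset.univ.filter (fun G : Finset α => M.IsFlat ↑G ∧ (G : Set α) ⊆ ↑F), nu M G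
      = if (F : Set α) = M.closure ∅ then 1 else 0 := by
  have hmaps : ∀ S ∈ F.powerset, clF M S ∈
      Finset.univ.filter (fun G : Finset α => M.IsFlat ↑G ∧ (G : Set α) ⊆ ↑F) := by
    intro S hS
    rw [Finset.mem_filter]
    refine ⟨Finset.mem_univ _, clF_flat M S, ?_⟩
    exact_mod_cast clF_subset_flat M hE (Finset.mem_powerset.1 hS) hF
  have h1 : ∀ G ∈ Finset.univ.filter
      (fun G : Finset α => M.IsFlat ↑G ∧ (G : Set α) ⊆ ↑F), nu M G =
      ∑ S ∈ F.powerset.filter (fun S => clF M S = G), (-1 : ℤ) ^ S.card := by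
    intro G hG
    rw [Finset.mem_filter] at hG
    rw [nu, ← fiber_eq M hE (by exact_mod_cast hG.2.2)]
  rw [Finset.sum_congr rfl h1, Finset.sum_fiberwise_of_maps_to hmaps,
    Finset.sum_powerset_neg_one_pow_card, closure_empty_eq M hE h_loopless]
  simp [Finset.coe_eq_empty]

variable {μ : Finset α → ℤ}

lemma mu_eq_nu (h_loopless : ∀ a : α, M.Indep {a})
    (hμ : ∀ F : Finset α, M.IsFlat ↑F →
      (∑ G ∈ Finset.univ.filter (fun G : Finset α => M.IsFlat ↑G ∧ (G : Set α) ⊆ ↑F), μ G)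
        = if (F : Set α) = M.closure ∅ then 1 else 0) :
    ∀ F : Finset α, M.IsFlat ↑F → μ F = nu M F := by
  intro F
  induction F using Finset.strongInduction with
  | _ F ih =>
    intro hF
    have hsum : (∑ G ∈ Finset.univ.filter
        (fun G : Finset α => M.IsFlat ↑G ∧ (G : Set α) ⊆ ↑F), μ G)
        = ∑ G ∈ Finset.univ.filter
        (fun G : Finset α => M.IsFlat ↑G ∧ (G : Set α) ⊆ ↑F), nu M G := by
      rw [hμ F hF, sum_nu M hE h_loopless F hF]
    have hFmem : F ∈ Finset.univ.filter
        (fun G : Finset α => M.IsFlat ↑G ∧ (G : Set α) ⊆ ↑F) :=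
      Finset.mem_filter.2 ⟨Finset.mem_univ _, hF, subset_refl _⟩
    rw [← Finset.add_sum_erase _ _ hFmem, ← Finset.add_sum_erase _ _ hFmem] at hsum
    have herase : ∀ G ∈ (Finset.univ.filter
        (fun G : Finset α => M.IsFlat ↑G ∧ (G : Set α) ⊆ ↑F)).erase F, μ G = nu M G := by
      intro G hG
      rw [Finset.mem_erase, Finset.mem_filter] at hG
      exact ih G (ssubset_of_subset_of_ne (by exact_mod_cast hG.2.2.2) hG.1) hG.2.2.1
    rw [Finset.sum_congr rfl herase] at hsum
    exact add_right_cancel hsum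

lemma charPoly_eq_whitney (h_loopless : ∀ a : α, M.Indep {a})
    (hμ : ∀ F : Finset α, M.IsFlat ↑F →
      (∑ G ∈ Finset.univ.filter (fun G : Finset α => M.IsFlat ↑G ∧ (G : Set α) ⊆ ↑F), μ G)
        = if (F : Set α) = M.closure ∅ then 1 else 0) (r : ℕ) :
    charPoly M μ r = ∑ S ∈ (Finset.univ : Finset α).powerset,
      C ((-1 : ℤ) ^ S.card) * X ^ (r + 1 - matroidRank M (M.closure ↑S)) := by
  unfold charPoly
  have hmaps : ∀ S ∈ (Finset.univ : Finset α).powerset, clF M S ∈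
      Finset.univ.filter (fun F : Finset α => M.IsFlat ↑F) := fun S _ =>
    Finset.mem_filter.2 ⟨Finset.mem_univ _, clF_flat M S⟩
  rw [← Finset.sum_fiberwise_of_maps_to hmaps
    (fun S => C ((-1 : ℤ) ^ S.card) * X ^ (r + 1 - matroidRank M (M.closure ↑S)))]
  apply Finset.sum_congr rfl
  intro F hF
  rw [Finset.mem_filter] at hF
  have hterm : ∀ S ∈ (Finset.univ : Finset α).powerset.filter (fun S => clF M S = F),
      C ((-1 : ℤ) ^ S.card) * X ^ (r + 1 - matroidRank M (M.closure ↑S))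
        = C ((-1 : ℤ) ^ S.card) * X ^ (r + 1 - matroidRank M ↑F) := by
    intro S hS
    rw [Finset.mem_filter] at hS
    rw [← hS.2, coe_clF]
  rw [Finset.sum_congr rfl hterm, ← Finset.sum_mul, ← map_sum]
  congr 2
  rw [mu_eq_nu M hE h_loopless hμ F hF.2, nu]
  apply Finset.sum_congr _ (fun _ _ => rfl)
  ext S
  simp only [Finset.mem_filter, Finset.mem_powerset]
  constructor
  · rintro ⟨_, rfl⟩
    exact ⟨Finset.subset_univ _, rfl⟩
  · rintro ⟨_, rfl⟩
    exact ⟨subset_clF M hE S, rfl⟩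

end Aux4

section Aux5
open scoped Classical

variable {α : Type*} [Fintype α] [LinearOrder α] (M : Matroid α) (hE : M.E = Set.univ)
include hE

lemma sum_dep_zero (r : ℕ) :
    ∑ S ∈ (Finset.univ : Finset α).powerset.filter
      (fun S => ¬ ∀ B, IsBrokenCircuit M B → ¬ B ⊆ S),
      C ((-1 : ℤ) ^ S.card) * X ^ (r + 1 - matroidRank M (M.closure ↑S)) = 0 := by
  have hne : ∀ S ∈ (Finset.univ : Finset α).powerset.filter
      (fun S => ¬ ∀ B, IsBrokenCircuit M B → ¬ B ⊆ S), (DSet M S).Nonempty := by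
    intro S hS
    refine Finset.nonempty_iff_ne_empty.2 (fun h => (Finset.mem_filter.1 hS).2 ?_)
    exact (bcfree_iff_dset_empty M hE S).2 h
  apply Finset.sum_involution (g := fun S hS => tog S ((DSet M S).min' (hne S hS)))
  · intro S hS
    have hcl := closure_tog M ((DSet M S).min'_mem (hne S hS))
    rw [hcl]
    rcases tog_card (S := S) (e := (DSet M S).min' (hne S hS)) with h | h
    · rw [h, pow_succ, mul_neg_one, map_neg]
      ring
    · rw [h, pow_succ, mul_neg_one, map_neg]
      ring
  · intro S hS _
    exact tog_ne
  · intro S hS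
    obtain ⟨h', hmin⟩ := dset_tog_min M (hne S hS)
    have heq : (DSet M (tog S ((DSet M S).min' (hne S hS)))).min' _ =
        (DSet M S).min' (hne S hS) := hmin
    rw [heq, tog_tog]
  · intro S hS
    obtain ⟨h', _⟩ := dset_tog_min M (hne S hS)
    rw [Finset.mem_filter]
    refine ⟨Finset.mem_powerset.2 (Finset.subset_univ _), fun hall => ?_⟩
    rw [bcfree_iff_dset_empty M hE] at hall
    rw [hall] at h'
    exact Finset.not_nonempty_empty h'

lemma b_not_mem_broken {b : α} (hb : ∀ x : α, b ≤ x) {B : Finset α}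
    (hB : IsBrokenCircuit M B) : b ∉ B := by
  obtain ⟨C, _, hne, rfl⟩ := hB
  intro hmem
  obtain ⟨hbne, hbC⟩ := Finset.mem_erase.1 hmem
  exact hbne (le_antisymm (hb _) (C.min'_le b hbC))

end Aux5


open scoped Classical in
/-- For a finite loopless matroid `M` of rank `r+1` on a linearly ordered
ground set with least element `b`, the reduced characteristic polynomial
`χ̄_M(q) = χ_M(q)/(q-1)` equals `∑_{i=0}^{r} (-1)^i f_i(BC̄(M)) q^(r-i)`, where
`f_i(BC̄(M))` is the number of cardinality-`i` subsets of `E \ {b}` containing no broken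
circuit.  Equivalently, `χ_M(q) = (q-1) * ∑_{i=0}^{r} (-1)^i f_i(BC̄(M)) q^(r-i)`. -/
theorem reduced_charPoly_eq_reduced_broken_circuit_fvector
    {α : Type*} [Fintype α] [LinearOrder α]
    (M : Matroid α) (hE : M.E = Set.univ)
    (h_loopless : ∀ a : α, M.Indep {a})
    (r : ℕ) (h_rank : matroidRank M Set.univ = r + 1)
    (b : α) (hb : ∀ x : α, b ≤ x)
    (μ : Finset α → ℤ)
    (hμ : ∀ F : Finset α, M.IsFlat ↑F →
      (∑ G ∈ Finset.univ.filter (fun G : Finset α => M.IsFlat ↑G ∧ (G : Set α) ⊆ ↑F), μ G)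
        = if (F : Set α) = M.closure ∅ then 1 else 0) :
    charPoly M μ r =
      (X - 1) *
        ∑ i ∈ Finset.range (r + 1),
          C ((-1 : ℤ) ^ i *
            ((((Finset.univ.erase b).powersetCard i).filter
              (fun S : Finset α => ∀ B, IsBrokenCircuit M B → ¬ B ⊆ S)).card : ℤ)) *
            X ^ (r - i) := by
  
  have key := charPoly_eq_whitney M hE (μ := μ) h_loopless hμ r
  rw [key, ← Finset.sum_filter_add_sum_filter_not (Finset.univ : Finset α).powerset
    (fun S => ∀ B, IsBrokenCircuit M B → ¬ B ⊆ S)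
    (fun S => C ((-1 : ℤ) ^ S.card) * X ^ (r + 1 - matroidRank M (M.closure ↑S))),
    sum_dep_zero M hE r, add_zero]
  -- replace rank by cardinality on broken-circuit-free sets
  have hA : ∀ S ∈ (Finset.univ : Finset α).powerset.filter
      (fun S => ∀ B, IsBrokenCircuit M B → ¬ B ⊆ S),
      C ((-1 : ℤ) ^ S.card) * X ^ (r + 1 - matroidRank M (M.closure ↑S))
        = C ((-1 : ℤ) ^ S.card) * X ^ (r + 1 - S.card) := by
    intro S hS
    rw [rank_closure_indep M hE (indep_of_bcfree M hE (Finset.mem_filter.1 hS).2)]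
  rw [Finset.sum_congr rfl hA]
  -- split according to membership of b
  rw [← Finset.sum_filter_add_sum_filter_not ((Finset.univ : Finset α).powerset.filter
    (fun S => ∀ B, IsBrokenCircuit M B → ¬ B ⊆ S)) (fun S => b ∈ S)
    (fun S => C ((-1 : ℤ) ^ S.card) * X ^ (r + 1 - S.card))]
  have hPnot : (((Finset.univ : Finset α).powerset.filter
      (fun S => ∀ B, IsBrokenCircuit M B → ¬ B ⊆ S)).filter (fun S => ¬ b ∈ S))
      = ((Finset.univ.erase b).powerset).filter
        (fun S => ∀ B, IsBrokenCircuit M B → ¬ B ⊆ S) := by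
    ext S
    simp only [Finset.mem_filter, Finset.mem_powerset, Finset.subset_erase]
    tauto
  have hPin : ∑ S ∈ (((Finset.univ : Finset α).powerset.filter
      (fun S => ∀ B, IsBrokenCircuit M B → ¬ B ⊆ S)).filter (fun S => b ∈ S)),
      C ((-1 : ℤ) ^ S.card) * X ^ (r + 1 - S.card)
      = ∑ T ∈ ((Finset.univ.erase b).powerset).filter
        (fun S => ∀ B, IsBrokenCircuit M B → ¬ B ⊆ S),
        C ((-1 : ℤ) ^ (T.card + 1)) * X ^ (r + 1 - (T.card + 1)) := by
    refine Finset.sum_bij' (fun S _ => S.erase b) (fun T _ => insert b T)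
      ?_ ?_ ?_ ?_ ?_
    · intro S hS
      simp only [Finset.mem_filter, Finset.mem_powerset] at hS ⊢
      exact ⟨Finset.erase_subset_erase b (Finset.subset_univ S),
        fun B hB hBS => hS.1.2 B hB (hBS.trans (Finset.erase_subset b S))⟩
    · intro T hT
      simp only [Finset.mem_filter, Finset.mem_powerset, Finset.subset_erase] at hT ⊢
      refine ⟨⟨Finset.subset_univ _, fun B hB hBS => hT.2 B hB ?_⟩, Finset.mem_insert_self b T⟩
      rwa [Finset.subset_insert_iff_of_notMem (b_not_mem_broken M hE hb hB)] at hBS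
    · intro S hS
      simp only [Finset.mem_filter] at hS
      exact Finset.insert_erase hS.2
    · intro T hT
      simp only [Finset.mem_filter, Finset.mem_powerset, Finset.subset_erase] at hT
      exact Finset.erase_insert hT.1.2
    · intro S hS
      simp only [Finset.mem_filter] at hS
      rw [Finset.card_erase_add_one hS.2]
  rw [hPnot, hPin, ← Finset.sum_add_distrib]
  -- cardinality bound
  have hcard : ∀ T ∈ ((Finset.univ.erase b).powerset).filter
      (fun S : Finset α => ∀ B, IsBrokenCircuit M B → ¬ B ⊆ S), T.card ≤ r := by
    intro T hT
    simp only [Finset.mem_filter, Finset.mem_powerset, Finset.subset_erase] at hT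
    have hind : M.Indep ↑(insert b T) := by
      apply indep_of_bcfree M hE
      intro B hB hBS
      exact hT.2 B hB (by
        rwa [Finset.subset_insert_iff_of_notMem (b_not_mem_broken M hE hb hB)] at hBS)
    have := indep_card_le_rank M hE hind
    rw [h_rank, Finset.card_insert_of_notMem hT.1.2] at this
    omega
  have hterm : ∀ T ∈ ((Finset.univ.erase b).powerset).filter
      (fun S : Finset α => ∀ B, IsBrokenCircuit M B → ¬ B ⊆ S),
      (C ((-1 : ℤ) ^ (T.card + 1)) * X ^ (r + 1 - (T.card + 1))
        + C ((-1 : ℤ) ^ T.card) * X ^ (r + 1 - T.card))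
      = (X - 1) * (C ((-1 : ℤ) ^ T.card) * X ^ (r - T.card)) := by
    intro T hT
    have h1 : r + 1 - (T.card + 1) = r - T.card := by omega
    have h2 : r + 1 - T.card = (r - T.card) + 1 := by
      have := hcard T hT; omega
    rw [h1, h2, pow_succ (-1 : ℤ), mul_neg_one, map_neg, pow_succ X]
    ring
  rw [Finset.sum_congr rfl hterm, ← Finset.mul_sum]
  congr 1
  -- regroup by cardinality
  have hmaps : ∀ T ∈ ((Finset.univ.erase b).powerset).filter
      (fun S : Finset α => ∀ B, IsBrokenCircuit M B → ¬ B ⊆ S),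
      T.card ∈ Finset.range (r + 1) := fun T hT =>
    Finset.mem_range.2 (Nat.lt_succ_of_le (hcard T hT))
  rw [← Finset.sum_fiberwise_of_maps_to hmaps
    (fun T => C ((-1 : ℤ) ^ T.card) * X ^ (r - T.card))]
  apply Finset.sum_congr rfl
  intro i hi
  have hfilter : (((Finset.univ.erase b).powerset).filter
      (fun S : Finset α => ∀ B, IsBrokenCircuit M B → ¬ B ⊆ S)).filter
        (fun T => T.card = i)
      = ((Finset.univ.erase b).powersetCard i).filter
        (fun S : Finset α => ∀ B, IsBrokenCircuit M B → ¬ B ⊆ S) := by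
    ext T
    simp only [Finset.mem_filter, Finset.mem_powerset, Finset.mem_powersetCard]
    tauto
  have hconst : ∀ T ∈ (((Finset.univ.erase b).powerset).filter
      (fun S : Finset α => ∀ B, IsBrokenCircuit M B → ¬ B ⊆ S)).filter
        (fun T => T.card = i),
      C ((-1 : ℤ) ^ T.card) * X ^ (r - T.card) = C ((-1 : ℤ) ^ i) * X ^ (r - i) := by
    intro T hT
    rw [(Finset.mem_filter.1 hT).2]
  rw [Finset.sum_congr rfl hconst, Finset.sum_const, hfilter, nsmul_eq_mul, map_mul,
    Polynomial.C_eq_natCast]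
  ring
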